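/- Let f : ℝ^m → ℝ^m and suppose ⟨f(x), x⟩ ≤ α − β|x|² for all x and constants α, β > 0. Fix τ ∈ (0, 2β) and set α̃ = α + τ/2, β̃ = β − τ/2. If x* = x + Δ·f(x) with Δ > 0 and |f(x*) − f(x)| ≤ τ, then |x*|² ≤ |x|² + 2Δ(α̃ − β̃|x*|²). -/
import Mathlib

open RealInnerProductSpace

/-- Dissipativity estimate for the adaptive Euler half-step: if `f` satisfies
the coercivity condition `⟪f(x), x⟫ ≤ α - β‖x‖²`, `τ ∈ (0, 2β)`,
`x* = x + Δ f(x)` with `Δ > 0` and the error control `‖f(x*) - f(x)‖ ≤ τ`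
holds, then `‖x*‖² ≤ ‖x‖² + 2Δ(α̃ - β̃‖x*‖²)` with `α̃ = α + τ/2`,
`β̃ = β - τ/2`. -/
theorem half_step_dissipativity {m : ℕ}
    (f : EuclideanSpace ℝ (Fin m) → EuclideanSpace ℝ (Fin m))
    (α β τ Δ : ℝ) (hα : 0 < α) (hβ : 0 < β) (hτ : 0 < τ) (hτβ : τ < 2 * β)
    (hΔ : 0 < Δ)
    (hcoerce : ∀ y, ⟪f y, y⟫ ≤ α - β * ‖y‖ ^ 2)
    (x xstar : EuclideanSpace ℝ (Fin m))
    (hxstar : xstar = x + Δ • f x)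
    (herr : ‖f xstar - f x‖ ≤ τ) :
    ‖xstar‖ ^ 2 ≤ ‖x‖ ^ 2 + 2 * Δ * ((α + τ / 2) - (β - τ / 2) * ‖xstar‖ ^ 2) := by
  have h1 : ⟪xstar, xstar⟫ = ⟪x, xstar⟫ + Δ * ⟪f x, xstar⟫ := by
    conv_lhs => rw [hxstar]
    rw [inner_add_left, real_inner_smul_left, ← hxstar]
  have hsplit : ⟪f x, xstar⟫ = ⟪f xstar, xstar⟫ + ⟪f x - f xstar, xstar⟫ := by
    rw [inner_sub_left]; ring
  have h2 : ⟪f x - f xstar, xstar⟫ ≤ τ * ‖xstar‖ := by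
    calc ⟪f x - f xstar, xstar⟫ ≤ ‖f x - f xstar‖ * ‖xstar‖ := real_inner_le_norm _ _
    _ ≤ τ * ‖xstar‖ := by
        rw [norm_sub_rev] at herr
        exact mul_le_mul_of_nonneg_right herr (norm_nonneg _)
  have h3 := hcoerce xstar
  have h4 : ⟪x, xstar⟫ ≤ ‖x‖ * ‖xstar‖ := real_inner_le_norm _ _
  have h5 : ⟪xstar, xstar⟫ = ‖xstar‖ ^ 2 := real_inner_self_eq_norm_sq xstar
  nlinarith [sq_nonneg (‖xstar‖ - 1), sq_nonneg (‖x‖ - ‖xstar‖), mul_pos hΔ hτ,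
    norm_nonneg xstar, norm_nonneg x]
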